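/- Let (X, d) be a complete separable metric space, T an (r,r)-net on X, and R ≥ r. If T admits an (R+2r, D)-padded decomposition with m layers, then X admits an (R, D)-cover with m layers. -/
import Mathlib


open Metric

/-- A family of sets is `r`-disjoint: distinct members are at distance `> r`. -/
def RDisjointFam {X : Type*} [MetricSpace X] (r : ℝ) (U : Set (Set X)) : Prop :=
  ∀ A ∈ U, ∀ B ∈ U, A ≠ B → ∀ a ∈ A, ∀ b ∈ B, r < dist a b

/-- A family of sets is `D`-bounded: each member has diameter at most `D`. -/
def DBoundedFam {X : Type*} [MetricSpace X] (D : ℝ) (U : Set (Set X)) : Prop :=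
  ∀ A ∈ U, ∀ a ∈ A, ∀ b ∈ A, dist a b ≤ D

/-- An `(r, D)`-cover of `X` with `m` layers. -/
def IsCover {X : Type*} [MetricSpace X] (r D : ℝ) {m : ℕ} (U : Fin m → Set (Set X)) : Prop :=
  (∀ i, RDisjointFam r (U i)) ∧ (∀ i, DBoundedFam D (U i)) ∧ ∀ x : X, ∃ i, ∃ A ∈ U i, x ∈ A

/-- An `(R, D)`-padded decomposition with `m` layers associated to the net `T`:
each layer partitions `T` (covers `T`, members pairwise disjoint on `T`), is `D`-bounded,
and every `x ∈ T` has its `R`-ball contained in some member of some layer. -/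
def IsPaddedDecomposition {X : Type*} [MetricSpace X] (T : Set X) (R D : ℝ) {m : ℕ}
    (P : Fin m → Set (Set X)) : Prop :=
  (∀ i, T ⊆ ⋃₀ (P i)) ∧
  (∀ i, ∀ A ∈ P i, ∀ B ∈ P i, A ≠ B → A ∩ B ∩ T = ∅) ∧
  (∀ i, DBoundedFam D (P i)) ∧
  (∀ x ∈ T, ∃ i, ∃ C ∈ P i, ball x R ⊆ C)


/-- If the `(r,r)`-net `T` of a complete separable metric space `X` admits an
`(R+2r, D)`-padded decomposition with `m` layers, then `X` admits an `(R, D)`-cover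
with `m` layers. -/
theorem padded_to_cover {X : Type*} [MetricSpace X] [CompleteSpace X]
    [TopologicalSpace.SeparableSpace X]
    (T : Set X) (r : ℝ) (hr : 0 < r)
    (hsep : ∀ x ∈ T, ∀ y ∈ T, x ≠ y → r ≤ dist x y)
    (hcov : ∀ x : X, ∃ y ∈ T, dist x y < r)
    (R : ℝ) (hR : r ≤ R) (D : ℝ) (m : ℕ)
    (hP : ∃ P : Fin m → Set (Set X), IsPaddedDecomposition T (R + 2 * r) D P) :
    ∃ U : Fin m → Set (Set X), IsCover R D U := by
  obtain ⟨P, hPcov, hPdisj, hPbd, hPpad⟩ := hP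
  refine ⟨fun i => (fun A => {x : X | ∀ z, dist x z < R + r → z ∈ A}) '' (P i), ?_, ?_, ?_⟩
  · -- R-disjoint
    rintro i _ ⟨A, hA, rfl⟩ _ ⟨B, hB, rfl⟩ hne a ha b hb
    by_contra hle
    push_neg at hle
    have hAB : A ≠ B := by rintro rfl; exact hne rfl
    obtain ⟨y, hyT, hy⟩ := hcov b
    have hyA : y ∈ A := ha y (by
      calc dist a y ≤ dist a b + dist b y := dist_triangle a b y
        _ < R + r := by linarith)
    have hyB : y ∈ B := hb y (by linarith)
    have := hPdisj i A hA B hB hAB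
    have : y ∈ A ∩ B ∩ T := ⟨⟨hyA, hyB⟩, hyT⟩
    rw [hPdisj i A hA B hB hAB] at this
    exact this
  · -- D-bounded
    rintro i _ ⟨A, hA, rfl⟩ a ha b hb
    have haA : a ∈ A := ha a (by simp; linarith)
    have hbA : b ∈ A := hb b (by simp; linarith)
    exact hPbd i A hA a haA b hbA
  · -- covers
    intro x
    obtain ⟨y, hyT, hy⟩ := hcov x
    obtain ⟨i, C, hC, hball⟩ := hPpad y hyT
    refine ⟨i, _, ⟨C, hC, rfl⟩, fun z hz => hball ?_⟩
    rw [mem_ball, dist_comm]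
    calc dist y z ≤ dist y x + dist x z := dist_triangle y x z
      _ < R + 2 * r := by rw [dist_comm] at hy; linarith
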